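/- Let f : ℝ → ℝ be s-continuous on [0,1], i.e. for every open G ⊆ ℝ the set {x ∈ [0,1] : f(x) ∈ G} is semi-open in the subspace topology of [0,1]. Then for every real q: there exists x ∈ [0,1] with f(x) > q if and only if there exists a rational r ∈ [0,1] with f(r) > q. -/
import Mathlib


theorem sContinuous_sup_rational (f : ℝ → ℝ)
    (hf : ∀ G : Set ℝ, IsOpen G →
      ({x : Set.Icc (0:ℝ) 1 | f ↑x ∈ G} : Set (Set.Icc (0:ℝ) 1)) ⊆
        closure (interior {x : Set.Icc (0:ℝ) 1 | f ↑x ∈ G})) :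
    ∀ q : ℝ, (∃ x ∈ Set.Icc (0:ℝ) 1, f x > q) ↔
      (∃ r : ℚ, (r : ℝ) ∈ Set.Icc (0:ℝ) 1 ∧ f r > q) := by
  intro q
  constructor
  · rintro ⟨x, hx, hfx⟩
    set S : Set (Set.Icc (0:ℝ) 1) := {y : Set.Icc (0:ℝ) 1 | f ↑y ∈ Set.Ioi q}
    have hS := hf (Set.Ioi q) isOpen_Ioi
    have hxS : (⟨x, hx⟩ : Set.Icc (0:ℝ) 1) ∈ S := hfx
    have hcl : (⟨x, hx⟩ : Set.Icc (0:ℝ) 1) ∈ closure (interior S) := hS hxS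
    have hne : (interior S).Nonempty := by
      by_contra h
      rw [Set.not_nonempty_iff_eq_empty] at h
      rw [h, closure_empty] at hcl
      exact hcl
    obtain ⟨y, hy⟩ := hne
    -- interior S is open in the subtype; get an open U in ℝ
    obtain ⟨U, hU, hUeq⟩ := isOpen_induced_iff.mp (isOpen_interior (s := S))
    have hyU : (y : ℝ) ∈ U := by
      have : y ∈ Subtype.val ⁻¹' U := hUeq ▸ hy
      exact this
    obtain ⟨ε, hε, hball⟩ := Metric.isOpen_iff.mp hU _ hyU
    have hy0 : (0:ℝ) ≤ y := y.2.1
    have hy1 : (y:ℝ) ≤ 1 := y.2.2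
    set a : ℝ := max 0 ((y:ℝ) - ε)
    set b : ℝ := min 1 ((y:ℝ) + ε)
    have hab : a < b := by
      apply max_lt <;> apply lt_min
      · norm_num
      · linarith
      · linarith
      · linarith
    obtain ⟨r, hra, hrb⟩ := exists_rat_btwn hab
    have hr0 : (0:ℝ) ≤ r := le_of_lt (lt_of_le_of_lt (le_max_left _ _) hra)
    have hr1 : (r:ℝ) ≤ 1 := le_of_lt (lt_of_lt_of_le hrb (min_le_left _ _))
    have hrIcc : (r:ℝ) ∈ Set.Icc (0:ℝ) 1 := ⟨hr0, hr1⟩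
    have hrball : (r:ℝ) ∈ Metric.ball (y:ℝ) ε := by
      rw [Metric.mem_ball, Real.dist_eq, abs_lt]
      constructor
      · have := lt_of_le_of_lt (le_max_right 0 ((y:ℝ) - ε)) hra
        linarith
      · have := lt_of_lt_of_le hrb (min_le_right 1 ((y:ℝ) + ε))
        linarith
    have hrU : (r:ℝ) ∈ U := hball hrball
    have hrint : (⟨(r:ℝ), hrIcc⟩ : Set.Icc (0:ℝ) 1) ∈ interior S := by
      exact hUeq ▸ hrU
    have hrS : (⟨(r:ℝ), hrIcc⟩ : Set.Icc (0:ℝ) 1) ∈ S := interior_subset hrint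
    exact ⟨r, hrIcc, hrS⟩
  · rintro ⟨r, hr, hfr⟩
    exact ⟨r, hr, hfr⟩
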